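/- For every integer k ≥ 1 and every sequence of positive real numbers p_1, …, p_k with p_1 + ⋯ + p_k = 1, there exist binary strings w_1, …, w_k that are pairwise prefix-incomparable (the family is prefix-free), strictly increasing in lexicographic order (w_1 < w_2 < ⋯ < w_k), and such that for each i the length of w_i is at most ⌈log₂(1/p_i)⌉ + 1. -/

import Mathlib

def toBits : ℕ → ℕ → List Bool
  | 0, _ => []
  | l+1, m => toBits l (m / 2) ++ [decide (m % 2 = 1)]

lemma toBits_length (l m : ℕ) : (toBits l m).length = l := by
  induction l generalizing m with
  | zero => rfl
  | succ l ih => simp [toBits, ih]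

lemma toBits_split (a b m : ℕ) :
    toBits (a + b) m = toBits a (m / 2^b) ++ toBits b (m % 2^b) := by
  induction b generalizing m with
  | zero => simp [toBits]
  | succ b ih =>
      have h1 : (m % 2^(b+1)) / 2 = (m / 2) % 2^b := by
        rw [pow_succ', Nat.mod_mul_right_div_self]
      have h2 : (m % 2^(b+1)) % 2 = m % 2 := Nat.mod_mod_of_dvd m (dvd_pow_self 2 (by omega))
      show toBits ((a+b)+1) m = _
      rw [toBits, ih (m/2), toBits, h1, h2, Nat.div_div_eq_div_mul, ← pow_succ',
        List.append_assoc]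

lemma toBits_sep (l m n : ℕ) (hmn : m < n) (hn : n < 2^l) :
    ∃ c u v, toBits l m = c ++ false :: u ∧ toBits l n = c ++ true :: v := by
  induction l generalizing m n with
  | zero => simp at hn; omega
  | succ l ih =>
    have hn2 : n / 2 < 2^l := by rw [pow_succ] at hn; omega
    rcases Nat.lt_or_ge (m/2) (n/2) with h | h
    · obtain ⟨c,u,v,h1,h2⟩ := ih (m/2) (n/2) h hn2
      exact ⟨c, u ++ [decide (m % 2 = 1)], v ++ [decide (n % 2 = 1)],
        by rw [toBits, h1]; simp, by rw [toBits, h2]; simp⟩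
    · have he : m / 2 = n / 2 ∧ m % 2 = 0 ∧ n % 2 = 1 := by omega
      refine ⟨toBits l (m/2), [], [], ?_, ?_⟩
      · rw [toBits, he.2.1]; simp
      · rw [toBits, he.1, he.2.2]; simp

lemma not_prefix_aux (c u v : List Bool) (a b : Bool) (hab : a ≠ b) :
    ¬ (c ++ a :: u <+: c ++ b :: v) := by
  rintro ⟨t, ht⟩
  rw [List.append_assoc, List.cons_append] at ht
  have := List.append_cancel_left ht
  exact hab (by injection this)

lemma key_sep (l l' m n : ℕ) (hn : n < 2^l') (h : (m+1) * 2^l' ≤ n * 2^l) :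
    ∃ c u v, toBits l m = c ++ false :: u ∧ toBits l' n = c ++ true :: v := by
  rcases Nat.le_total l l' with hl | hl
  · obtain ⟨b, rfl⟩ := Nat.exists_eq_add_of_le hl
    have hb : (m+1) * 2^b ≤ n := by
      have h2 : ((m+1) * 2^b) * 2^l ≤ n * 2^l := by
        calc ((m+1) * 2^b) * 2^l = (m+1) * 2^(l+b) := by ring
        _ ≤ n * 2^l := h
      exact Nat.le_of_mul_le_mul_right h2 (by positivity)
    have h1 : m + 1 ≤ n / 2^b := (Nat.le_div_iff_mul_le (by positivity)).2 hb
    have h2 : n / 2^b < 2^l := Nat.div_lt_of_lt_mul (by rw [← pow_add, Nat.add_comm b l]; exact hn)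
    obtain ⟨c,u,v,hc1,hc2⟩ := toBits_sep l m (n/2^b) (by omega) h2
    refine ⟨c, u, v ++ toBits b (n % 2^b), hc1, ?_⟩
    rw [toBits_split l b n, hc2]; simp
  · obtain ⟨b, rfl⟩ := Nat.exists_eq_add_of_le hl
    have hb : m + 1 ≤ n * 2^b := by
      have h2 : (m+1) * 2^l' ≤ (n * 2^b) * 2^l' := by
        calc (m+1) * 2^l' ≤ n * 2^(l'+b) := h
        _ = (n * 2^b) * 2^l' := by ring
      exact Nat.le_of_mul_le_mul_right h2 (by positivity)
    have h1 : m / 2^b < n := Nat.div_lt_of_lt_mul (by rw [mul_comm]; omega)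
    obtain ⟨c,u,v,hc1,hc2⟩ := toBits_sep l' (m/2^b) n h1 hn
    refine ⟨c, u ++ toBits b (m % 2^b), v, ?_, hc2⟩
    rw [toBits_split l' b m, hc1]; simp

lemma lt_aux (c u v : List Bool) : c ++ false :: u < c ++ true :: v := by
  induction c with
  | nil => exact List.Lex.rel (by decide)
  | cons a c ih => exact List.Lex.cons ih


/-- Gilbert–Moore theorem: given a positive probability distribution `p₁, …, p_k`,
there is a lexicographically increasing prefix-free family of binary strings
`w₁ < ⋯ < w_k` with `|w_i| ≤ ⌈log₂(1/p_i)⌉ + 1`. -/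
theorem gilbert_moore (k : ℕ) (hk : 1 ≤ k) (p : Fin k → ℝ)
    (hpos : ∀ i, 0 < p i) (hsum : ∑ i, p i = 1) :
    ∃ w : Fin k → List Bool,
      (∀ i j, i ≠ j → ¬ (w i <+: w j)) ∧
      (∀ i j, i < j → w i < w j) ∧
      (∀ i, ((w i).length : ℤ) ≤ ⌈Real.logb 2 (1 / p i)⌉ + 1) := by
  set S : Fin k → ℝ := fun i => ∑ t ∈ Finset.Iio i, p t with hSdef
  set c : Fin k → ℝ := fun i => S i + p i / 2 with hcdef
  set L : Fin k → ℕ := fun i => (⌈Real.logb 2 (1 / p i)⌉ + 1).toNat with hLdef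
  set m : Fin k → ℕ := fun i => ⌊c i * 2 ^ L i⌋₊ with hmdef
  -- basic facts
  have hp1 : ∀ i, p i ≤ 1 := by
    intro i
    rw [← hsum]
    exact Finset.single_le_sum (fun j _ => (hpos j).le) (Finset.mem_univ i)
  have hceil : ∀ i, 0 ≤ ⌈Real.logb 2 (1 / p i)⌉ := by
    intro i
    exact Int.ceil_nonneg (Real.logb_nonneg one_lt_two
      ((le_div_iff₀ (hpos i)).2 (by linarith [hp1 i])))
  have hL : ∀ i, (L i : ℤ) = ⌈Real.logb 2 (1 / p i)⌉ + 1 := by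
    intro i
    simp only [hLdef]
    exact Int.toNat_of_nonneg (by linarith [hceil i])
  have hpow : ∀ i, 2 ≤ p i * 2 ^ L i := by
    intro i
    have h1 : Real.logb 2 (1 / p i) + 1 ≤ (L i : ℝ) := by
      have := hL i
      have h2 : Real.logb 2 (1 / p i) ≤ (⌈Real.logb 2 (1 / p i)⌉ : ℝ) := Int.le_ceil _
      have h3 : ((L i : ℤ) : ℝ) = ((⌈Real.logb 2 (1 / p i)⌉ : ℤ) : ℝ) + 1 := by
        exact_mod_cast congrArg (fun z : ℤ => (z : ℝ)) this
      push_cast at h3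
      linarith
    have h4 : (2:ℝ) ^ (Real.logb 2 (1 / p i) + 1) ≤ (2:ℝ) ^ ((L i : ℕ) : ℝ) :=
      Real.rpow_le_rpow_of_exponent_le one_le_two h1
    rw [Real.rpow_natCast] at h4
    rw [Real.rpow_add (by norm_num), Real.rpow_one,
      Real.rpow_logb (by norm_num) (by norm_num) (one_div_pos.2 (hpos i))] at h4
    have h5 := mul_le_mul_of_nonneg_left h4 (hpos i).le
    have h6 : p i * (1 / p i * 2) = 2 := by
      field_simp
      rw [div_self (hpos i).ne']
    linarith
  have hSnn : ∀ i, 0 ≤ S i := fun i =>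
    Finset.sum_nonneg fun t _ => (hpos t).le
  have hcnn : ∀ i, 0 ≤ c i := fun i => by
    have := hpos i; have := hSnn i; simp only [hcdef]; linarith
  have hpow2 : ∀ i : Fin k, (0:ℝ) < 2 ^ L i := fun i => by positivity
  -- upper bound: (m i + 1)/2^L i ≤ S i + p i
  have hub : ∀ i, ((m i : ℝ) + 1) / 2 ^ L i ≤ S i + p i := by
    intro i
    rw [div_le_iff₀ (hpow2 i)]
    have h1 : (m i : ℝ) ≤ c i * 2 ^ L i := Nat.floor_le (mul_nonneg (hcnn i) (by positivity))
    have h2 := hpow i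
    simp only [hcdef] at h1 ⊢
    nlinarith
  -- lower bound: S j ≤ m j / 2^L j
  have hlb : ∀ j, S j ≤ (m j : ℝ) / 2 ^ L j := by
    intro j
    rw [le_div_iff₀ (hpow2 j)]
    have h1 : c j * 2 ^ L j < (m j : ℝ) + 1 := Nat.lt_floor_add_one _
    have h2 := hpow j
    simp only [hcdef] at h1
    nlinarith
  -- monotonicity
  have hmono : ∀ i j : Fin k, i < j → S i + p i ≤ S j := by
    intro i j hij
    have h1 : insert i (Finset.Iio i) = Finset.Iic i := Finset.Iio_insert i
    have h2 : S i + p i = ∑ t ∈ Finset.Iic i, p t := by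
      rw [← h1, Finset.sum_insert (by simp)]; simp only [hSdef]; ring
    rw [h2]
    exact Finset.sum_le_sum_of_subset_of_nonneg
      (fun t ht => by simp at ht ⊢; exact lt_of_le_of_lt ht hij)
      (fun t _ _ => (hpos t).le)
  -- m j < 2^(L j)
  have hmlt : ∀ j, m j < 2 ^ L j := by
    intro j
    have hc1 : c j < 1 := by
      have h2 : S j + p j = ∑ t ∈ Finset.Iic j, p t := by
        rw [← Finset.Iio_insert, Finset.sum_insert (by simp)]; simp only [hSdef]; ring
      have h3 : ∑ t ∈ Finset.Iic j, p t ≤ 1 := by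
        rw [← hsum]
        exact Finset.sum_le_sum_of_subset_of_nonneg (Finset.subset_univ _)
          (fun t _ _ => (hpos t).le)
      have := hpos j
      simp only [hcdef]; linarith [h2 ▸ h3]
    have : c j * 2 ^ L j < 2 ^ L j := by nlinarith [hpow2 j]
    have hf : (m j : ℝ) < (2:ℝ) ^ L j := lt_of_le_of_lt (Nat.floor_le (mul_nonneg (hcnn j) (by positivity))) this
    exact_mod_cast (by push_cast; exact hf : (m j : ℝ) < ((2^L j : ℕ) : ℝ))
  -- key natural-number inequality
  have hkey : ∀ i j : Fin k, i < j → (m i + 1) * 2 ^ L j ≤ m j * 2 ^ L i := by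
    intro i j hij
    have hreal : ((m i : ℝ) + 1) / 2 ^ L i ≤ (m j : ℝ) / 2 ^ L j :=
      le_trans (hub i) (le_trans (hmono i j hij) (hlb j))
    rw [div_le_div_iff₀ (hpow2 i) (hpow2 j)] at hreal
    have : ((m i : ℝ) + 1) * 2 ^ L j ≤ (m j : ℝ) * 2 ^ L i := hreal
    exact_mod_cast (by push_cast; linarith : (((m i + 1) * 2 ^ L j : ℕ) : ℝ) ≤ ((m j * 2 ^ L i : ℕ) : ℝ))
  -- conclude
  refine ⟨fun i => toBits (L i) (m i), ?_, ?_, ?_⟩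
  · intro i j hij
    rcases lt_or_gt_of_ne hij with h | h
    · obtain ⟨cc, u, v, h1, h2⟩ := key_sep (L i) (L j) (m i) (m j) (hmlt j) (hkey i j h)
      show ¬ toBits (L i) (m i) <+: toBits (L j) (m j)
      rw [h1, h2]
      exact not_prefix_aux cc u v false true (by decide)
    · obtain ⟨cc, u, v, h1, h2⟩ := key_sep (L j) (L i) (m j) (m i) (hmlt i) (hkey j i h)
      show ¬ toBits (L i) (m i) <+: toBits (L j) (m j)
      rw [h1, h2]
      exact not_prefix_aux cc v u true false (by decide)
  · intro i j h
    obtain ⟨cc, u, v, h1, h2⟩ := key_sep (L i) (L j) (m i) (m j) (hmlt j) (hkey i j h)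
    show toBits (L i) (m i) < toBits (L j) (m j)
    rw [h1, h2]
    exact lt_aux cc u v
  · intro i
    show (((toBits (L i) (m i)).length : ℤ)) ≤ _
    rw [toBits_length]
    rw [← hL i]
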